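/- For the action α₄ of (ℝ,+) on ℝ² given by α₄(t,(x,y)) = (eᵗ(x·cos t − y·sin t), eᵗ(x·sin t + y·cos t)), define on ℝ² ∖ {(0,0)}, with r = √(x²+y²), the functions ιx(x,y) = (x·cos(ln r) + y·sin(ln r))/r and ιy(x,y) = (y·cos(ln r) − x·sin(ln r))/r. Then ιx and ιy are invariant under α₄, i.e. ιx(α₄(t,p)) = ιx(p) and ιy(α₄(t,p)) = ιy(p) for all t ∈ ℝ and all p ≠ (0,0), and they satisfy the syzygy ιx(p)² + ιy(p)² = 1 for all p ≠ (0,0). -/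

import Mathlib

/-- The spiral action α₄ of (ℝ,+) on ℝ². -/
noncomputable def alpha4 (t : ℝ) (p : ℝ × ℝ) : ℝ × ℝ :=
  (Real.exp t * (p.1 * Real.cos t - p.2 * Real.sin t),
   Real.exp t * (p.1 * Real.sin t + p.2 * Real.cos t))

/-- ιx(x,y) = (x·cos(ln r) + y·sin(ln r))/r with r = √(x²+y²). -/
noncomputable def iotaX (p : ℝ × ℝ) : ℝ :=
  (p.1 * Real.cos (Real.log (Real.sqrt (p.1 ^ 2 + p.2 ^ 2))) +
   p.2 * Real.sin (Real.log (Real.sqrt (p.1 ^ 2 + p.2 ^ 2)))) /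
    Real.sqrt (p.1 ^ 2 + p.2 ^ 2)

/-- ιy(x,y) = (y·cos(ln r) − x·sin(ln r))/r with r = √(x²+y²). -/
noncomputable def iotaY (p : ℝ × ℝ) : ℝ :=
  (p.2 * Real.cos (Real.log (Real.sqrt (p.1 ^ 2 + p.2 ^ 2))) -
   p.1 * Real.sin (Real.log (Real.sqrt (p.1 ^ 2 + p.2 ^ 2)))) /
    Real.sqrt (p.1 ^ 2 + p.2 ^ 2)

lemma sq_pos_of_ne (p : ℝ × ℝ) (hp : p ≠ (0, 0)) : 0 < p.1 ^ 2 + p.2 ^ 2 := by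
  rcases eq_or_ne p.1 0 with h1 | h1
  · have h2 : p.2 ≠ 0 := by
      intro h2; exact hp (Prod.ext h1 h2)
    positivity
  · positivity

lemma alpha4_sqrt (t : ℝ) (p : ℝ × ℝ) :
    Real.sqrt ((alpha4 t p).1 ^ 2 + (alpha4 t p).2 ^ 2) =
      Real.exp t * Real.sqrt (p.1 ^ 2 + p.2 ^ 2) := by
  have h : (alpha4 t p).1 ^ 2 + (alpha4 t p).2 ^ 2 =
      Real.exp t ^ 2 * (p.1 ^ 2 + p.2 ^ 2) := by
    have := Real.sin_sq_add_cos_sq t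
    simp only [alpha4]
    nlinarith [Real.sin_sq_add_cos_sq t]
  rw [h, Real.sqrt_mul (by positivity), Real.sqrt_sq (Real.exp_pos t).le]

theorem stmt_6 :
    (∀ t : ℝ, ∀ p : ℝ × ℝ, p ≠ (0, 0) →
      iotaX (alpha4 t p) = iotaX p ∧ iotaY (alpha4 t p) = iotaY p) ∧
    (∀ p : ℝ × ℝ, p ≠ (0, 0) → iotaX p ^ 2 + iotaY p ^ 2 = 1) := by
  constructor
  · intro t p hp
    have hpos := sq_pos_of_ne p hp
    have hr : 0 < Real.sqrt (p.1 ^ 2 + p.2 ^ 2) := Real.sqrt_pos.mpr hpos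
    have hs := alpha4_sqrt t p
    have hlog : Real.log (Real.sqrt ((alpha4 t p).1 ^ 2 + (alpha4 t p).2 ^ 2)) =
        t + Real.log (Real.sqrt (p.1 ^ 2 + p.2 ^ 2)) := by
      rw [hs, Real.log_mul (Real.exp_ne_zero t) hr.ne', Real.log_exp]
    constructor
    · rw [iotaX, iotaX, hlog, hs]
      simp only [alpha4, Real.cos_add, Real.sin_add]
      field_simp
      linear_combination (
        (p.1 * Real.cos (Real.log (Real.sqrt (p.1 ^ 2 + p.2 ^ 2))) +
         p.2 * Real.sin (Real.log (Real.sqrt (p.1 ^ 2 + p.2 ^ 2))))) *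
        Real.sin_sq_add_cos_sq t
    · rw [iotaY, iotaY, hlog, hs]
      simp only [alpha4, Real.cos_add, Real.sin_add]
      field_simp
      linear_combination (
        (p.2 * Real.cos (Real.log (Real.sqrt (p.1 ^ 2 + p.2 ^ 2))) -
         p.1 * Real.sin (Real.log (Real.sqrt (p.1 ^ 2 + p.2 ^ 2))))) *
        Real.sin_sq_add_cos_sq t
  · intro p hp
    have hpos := sq_pos_of_ne p hp
    have hr : 0 < Real.sqrt (p.1 ^ 2 + p.2 ^ 2) := Real.sqrt_pos.mpr hpos
    have hsq : Real.sqrt (p.1 ^ 2 + p.2 ^ 2) ^ 2 = p.1 ^ 2 + p.2 ^ 2 :=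
      Real.sq_sqrt hpos.le
    rw [iotaX, iotaY, div_pow, div_pow, ← add_div, hsq]
    rw [div_eq_one_iff_eq hpos.ne']
    nlinarith [Real.sin_sq_add_cos_sq (Real.log (Real.sqrt (p.1 ^ 2 + p.2 ^ 2)))]
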